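/- If f̂ ∈ ℝ^p is a global minimizer of g₂(f) = λ₂ Σ_{(i,j)∈N} w_{ij}|f_i − f_j| + ½‖f − m‖₂², then the vector f* defined coordinatewise by f*_i = t_{λ₁}(f̂_i) (elementwise soft-thresholding with threshold λ₁) is a global minimizer of g₁(f) = λ₁‖f‖₁ + λ₂ Σ_{(i,j)∈N} w_{ij}|f_i − f_j| + ½‖f − m‖₂². -/
import Mathlib

noncomputable def softThresh (τ σ : ℝ) : ℝ := Real.sign σ * max (|σ| - τ) 0

lemma softThresh_eq (τ σ : ℝ) (hτ : 0 ≤ τ) :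
    softThresh τ σ = max (σ - τ) 0 + min (σ + τ) 0 := by
  unfold softThresh
  rcases lt_trichotomy σ 0 with h | h | h
  · rw [Real.sign_of_neg h, abs_of_neg h]
    rcases le_or_gt (σ + τ) 0 with h2 | h2
    · rw [max_eq_left (by linarith), min_eq_left h2, max_eq_right (by linarith)]; ring
    · rw [max_eq_right (by linarith), min_eq_right h2.le, max_eq_right (by linarith)]; ring
  · rw [h]
    rw [max_eq_right (by linarith : (0:ℝ) - τ ≤ 0), min_eq_right (by linarith : (0:ℝ) ≤ 0 + τ)]
    simp
  · rw [Real.sign_of_pos h, abs_of_pos h]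
    rcases le_or_gt (σ - τ) 0 with h2 | h2
    · rw [max_eq_right h2, min_eq_right (by linarith)]; ring
    · rw [max_eq_left h2.le, min_eq_right (by linarith)]; ring

lemma softThresh_mono (τ : ℝ) (hτ : 0 ≤ τ) {a b : ℝ} (h : a ≤ b) :
    softThresh τ a ≤ softThresh τ b := by
  rw [softThresh_eq τ a hτ, softThresh_eq τ b hτ]
  exact add_le_add (max_le_max (by linarith) le_rfl) (min_le_min (by linarith) le_rfl)

lemma ell1_key (τ σ a : ℝ) (hτ : 0 ≤ τ) :
    τ * |softThresh τ σ| + (σ - softThresh τ σ) * (a - softThresh τ σ) ≤ τ * |a| := by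
  rw [softThresh_eq τ σ hτ]
  rcases le_or_gt σ (-τ) with h | h
  · rw [max_eq_right (by linarith), min_eq_left (by linarith), zero_add,
      abs_of_nonpos (by linarith)]
    rcases abs_cases a with h3 | h3 <;> nlinarith [h3.1]
  · rcases le_or_gt τ σ with h2 | h2
    · rw [max_eq_left (by linarith), min_eq_right (by linarith), add_zero,
        abs_of_nonneg (by linarith)]
      rcases abs_cases a with h4 | h4 <;> nlinarith [h4.1]
    · rw [max_eq_right (by linarith), min_eq_right (by linarith), add_zero]
      simp only [abs_zero, mul_zero, sub_zero, zero_add]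
      rcases abs_cases a with h4 | h4 <;> nlinarith [h4.1]

lemma abs_add_small (v u : ℝ) (h : |u| < |v|) : |v + u| = |v| + Real.sign v * u := by
  rcases lt_trichotomy v 0 with hv | hv | hv
  · rw [Real.sign_of_neg hv]
    rw [abs_of_neg hv] at h ⊢
    rcases abs_cases u with h2 | h2
    · rw [abs_of_neg (by linarith)]; ring
    · rw [abs_of_neg (by linarith)]; ring
  · rw [hv, abs_zero] at h
    exact absurd h (abs_nonneg u).not_gt
  · rw [Real.sign_of_pos hv]
    rw [abs_of_pos hv] at h ⊢
    rcases abs_cases u with h2 | h2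
    · rw [abs_of_pos (by linarith)]; ring
    · rw [abs_of_pos (by linarith)]; ring

/-- If `fhat` is a global minimizer of
`g₂(f) = λ₂ Σ_{(i,j)∈N} w_{ij} |f_i - f_j| + ½ ‖f - m‖₂²`,
then the elementwise soft-thresholding `f*_i = t_{λ₁}(fhat_i)` is a global minimizer of
`g₁(f) = λ₁ ‖f‖₁ + λ₂ Σ_{(i,j)∈N} w_{ij} |f_i - f_j| + ½ ‖f - m‖₂²`. -/
theorem softthresh_of_fused_minimizer
    (p : ℕ) (m : Fin p → ℝ) (lam₁ lam₂ : ℝ) (hlam₁ : 0 ≤ lam₁) (hlam₂ : 0 ≤ lam₂)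
    (N : Finset (Fin p × Fin p)) (w : Fin p × Fin p → ℝ) (hw : ∀ e ∈ N, 0 ≤ w e)
    (g₂ : (Fin p → ℝ) → ℝ)
    (hg₂ : ∀ f, g₂ f =
      lam₂ * ∑ e ∈ N, w e * |f e.1 - f e.2| + (1 / 2) * ∑ i, (f i - m i) ^ 2)
    (g₁ : (Fin p → ℝ) → ℝ)
    (hg₁ : ∀ f, g₁ f = lam₁ * ∑ i, |f i| +
      lam₂ * ∑ e ∈ N, w e * |f e.1 - f e.2| + (1 / 2) * ∑ i, (f i - m i) ^ 2)
    (fhat : Fin p → ℝ) (hmin : ∀ f, g₂ fhat ≤ g₂ f) :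
    ∀ f, g₁ (fun i => softThresh lam₁ (fhat i)) ≤ g₁ f := by
  intro f
  set x : Fin p → ℝ := fhat with hx
  set y : Fin p → ℝ := fun i => softThresh lam₁ (x i) with hy
  set d : Fin p → ℝ := fun i => f i - y i with hd
  set φ : Fin p × Fin p → ℝ := fun e =>
    if x e.1 = x e.2 then |d e.1 - d e.2| else Real.sign (x e.1 - x e.2) * (d e.1 - d e.2)
    with hφ
  set A : ℝ := lam₂ * ∑ e ∈ N, w e * φ e + ∑ i, (x i - m i) * d i with hA
  set B : ℝ := (1/2) * ∑ i, d i ^ 2 with hB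
  have hB0 : 0 ≤ B := by
    rw [hB]; positivity
  -- Step 1a: for small t > 0, 0 ≤ A * t + B * t ^ 2
  have key : ∀ t : ℝ, 0 < t →
      (∀ e ∈ N, x e.1 ≠ x e.2 → t * |d e.1 - d e.2| < |x e.1 - x e.2|) →
      0 ≤ A * t + B * t ^ 2 := by
    intro t ht hsmall
    have h1 := hmin (fun i => x i + t * d i)
    rw [hg₂, hg₂] at h1
    have hedge : ∀ e ∈ N,
        w e * |(x e.1 + t * d e.1) - (x e.2 + t * d e.2)| =
        w e * |x e.1 - x e.2| + t * (w e * φ e) := by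
      intro e he
      by_cases hxe : x e.1 = x e.2
      · have h0 : x e.1 - x e.2 = 0 := by rw [hxe]; ring
        have : (x e.1 + t * d e.1) - (x e.2 + t * d e.2) = t * (d e.1 - d e.2) := by
          rw [hxe]; ring
        rw [this, abs_mul, abs_of_pos ht, hφ]
        simp only [if_pos hxe]
        rw [h0, abs_zero]
        ring
      · have hlt : |t * (d e.1 - d e.2)| < |x e.1 - x e.2| := by
          rw [abs_mul, abs_of_pos ht]
          exact hsmall e he hxe
        have h2 := abs_add_small (x e.1 - x e.2) (t * (d e.1 - d e.2)) hlt
        have h3 : (x e.1 + t * d e.1) - (x e.2 + t * d e.2)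
            = (x e.1 - x e.2) + t * (d e.1 - d e.2) := by ring
        rw [h3, h2, hφ]
        simp only [if_neg hxe]
        ring
    have hsum1 : ∑ e ∈ N, w e * |(x e.1 + t * d e.1) - (x e.2 + t * d e.2)|
        = ∑ e ∈ N, w e * |x e.1 - x e.2| + t * ∑ e ∈ N, w e * φ e := by
      rw [Finset.sum_congr rfl hedge, Finset.sum_add_distrib, ← Finset.mul_sum]
    have hsum2 : ∑ i, ((x i + t * d i) - m i) ^ 2
        = ∑ i, ((x i - m i) ^ 2 + (2 * t) * ((x i - m i) * d i) + t ^ 2 * d i ^ 2) :=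
      Finset.sum_congr rfl (fun i _ => by ring)
    rw [hsum1, hsum2] at h1
    rw [Finset.sum_add_distrib, Finset.sum_add_distrib, ← Finset.mul_sum, ← Finset.mul_sum] at h1
    rw [hA, hB]
    nlinarith [h1]
  -- Step 1b: 0 ≤ A
  have hstep1 : 0 ≤ A := by
    by_contra hA'
    push_neg at hA'
    classical
    set S := N.filter (fun e => x e.1 ≠ x e.2) with hS
    have ht₀ : ∃ t₀ : ℝ, 0 < t₀ ∧
        ∀ e ∈ S, t₀ ≤ |x e.1 - x e.2| / (|d e.1 - d e.2| + 1) := by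
      by_cases hne : S.Nonempty
      · refine ⟨S.inf' hne (fun e => |x e.1 - x e.2| / (|d e.1 - d e.2| + 1)), ?_, ?_⟩
        · rw [Finset.lt_inf'_iff]
          intro e he
          have hxe : x e.1 ≠ x e.2 := (Finset.mem_filter.mp he).2
          have : 0 < |x e.1 - x e.2| := abs_pos.mpr (sub_ne_zero.mpr hxe)
          positivity
        · intro e he
          exact Finset.inf'_le _ he
      · exact ⟨1, one_pos, fun e he => absurd ⟨e, he⟩ hne⟩
    obtain ⟨t₀, ht₀pos, ht₀le⟩ := ht₀
    have h2B : (0:ℝ) < 2 * B + 1 := by linarith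
    set t := min t₀ (-A / (2 * B + 1)) with htdef
    have ht : 0 < t := lt_min ht₀pos (div_pos (by linarith) h2B)
    have hcond : ∀ e ∈ N, x e.1 ≠ x e.2 → t * |d e.1 - d e.2| < |x e.1 - x e.2| := by
      intro e he hne
      have heS : e ∈ S := Finset.mem_filter.mpr ⟨he, hne⟩
      have h1 : t ≤ |x e.1 - x e.2| / (|d e.1 - d e.2| + 1) :=
        le_trans (min_le_left _ _) (ht₀le e heS)
      have hpos : (0:ℝ) < |d e.1 - d e.2| + 1 := by positivity
      have h2 : t * (|d e.1 - d e.2| + 1) ≤ |x e.1 - x e.2| :=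
        (le_div_iff₀ hpos).mp h1
      nlinarith [abs_nonneg (d e.1 - d e.2)]
    have hkey := key t ht hcond
    have hts : t * (2 * B + 1) ≤ -A := (le_div_iff₀ h2B).mp (min_le_right _ _)
    have h1 : 0 ≤ t * (A + B * t) := by nlinarith [hkey]
    have h2 : 0 ≤ A + B * t := nonneg_of_mul_nonneg_right h1 ht
    nlinarith [mul_nonneg hB0 ht.le]
  -- Step 2: per-coordinate and per-edge subgradient inequalities at y
  have hl1 : ∀ i : Fin p, lam₁ * |y i| + (x i - y i) * d i ≤ lam₁ * |f i| := by
    intro i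
    have := ell1_key lam₁ (x i) (f i) hlam₁
    exact this
  have hfused : ∀ e ∈ N,
      w e * |y e.1 - y e.2| + w e * φ e ≤ w e * |f e.1 - f e.2| := by
    intro e he
    have hwe := hw e he
    rw [hφ]
    by_cases hxe : x e.1 = x e.2
    · simp only [if_pos hxe]
      have hyeq : y e.1 = y e.2 := by rw [hy]; simp only; rw [hxe]
      have hd12 : d e.1 - d e.2 = f e.1 - f e.2 := by
        show (f e.1 - y e.1) - (f e.2 - y e.2) = f e.1 - f e.2
        rw [hyeq]; ring
      rw [hyeq, sub_self, abs_zero, mul_zero, zero_add, hd12]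
    · simp only [if_neg hxe]
      rcases lt_or_gt_of_ne (sub_ne_zero.mpr hxe) with hsgn | hsgn
      · -- x e.1 < x e.2
        rw [Real.sign_of_neg hsgn]
        have hmono : y e.1 ≤ y e.2 := softThresh_mono lam₁ hlam₁ (by linarith [sub_neg.mp hsgn])
        have habs : |y e.1 - y e.2| = -(y e.1 - y e.2) := abs_of_nonpos (by linarith)
        rw [habs]
        have h1 : -(f e.1 - f e.2) ≤ |f e.1 - f e.2| := neg_le_abs _
        have hd1 : d e.1 = f e.1 - y e.1 := rfl
        have hd2 : d e.2 = f e.2 - y e.2 := rfl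
        rw [hd1, hd2]
        nlinarith [h1]
      · -- x e.1 > x e.2
        rw [Real.sign_of_pos (by linarith : (0:ℝ) < x e.1 - x e.2)]
        have hmono : y e.2 ≤ y e.1 := softThresh_mono lam₁ hlam₁ (by linarith [sub_pos.mp hsgn])
        have habs : |y e.1 - y e.2| = y e.1 - y e.2 := abs_of_nonneg (by linarith)
        rw [habs]
        have h1 : f e.1 - f e.2 ≤ |f e.1 - f e.2| := le_abs_self _
        have hd1 : d e.1 = f e.1 - y e.1 := rfl
        have hd2 : d e.2 = f e.2 - y e.2 := rfl
        rw [hd1, hd2]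
        nlinarith [h1]
  -- Step 3: combine
  rw [hg₁, hg₁]
  have hsuml1 : lam₁ * ∑ i, |y i| + ∑ i, (x i - y i) * d i ≤ lam₁ * ∑ i, |f i| := by
    rw [Finset.mul_sum, Finset.mul_sum, ← Finset.sum_add_distrib]
    exact Finset.sum_le_sum (fun i _ => hl1 i)
  have hsumf : lam₂ * ∑ e ∈ N, w e * |y e.1 - y e.2| + lam₂ * ∑ e ∈ N, w e * φ e
      ≤ lam₂ * ∑ e ∈ N, w e * |f e.1 - f e.2| := by
    have := Finset.sum_le_sum hfused
    rw [Finset.sum_add_distrib] at this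
    calc lam₂ * ∑ e ∈ N, w e * |y e.1 - y e.2| + lam₂ * ∑ e ∈ N, w e * φ e
        = lam₂ * (∑ e ∈ N, w e * |y e.1 - y e.2| + ∑ e ∈ N, w e * φ e) := by ring
      _ ≤ lam₂ * ∑ e ∈ N, w e * |f e.1 - f e.2| :=
          mul_le_mul_of_nonneg_left this hlam₂
  have hquad : ∑ i, (f i - m i) ^ 2
      = ∑ i, (y i - m i) ^ 2 + 2 * ∑ i, (y i - m i) * d i + ∑ i, d i ^ 2 := by
    have h1 : ∑ i, (f i - m i) ^ 2
        = ∑ i, ((y i - m i) ^ 2 + 2 * ((y i - m i) * d i) + d i ^ 2) :=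
      Finset.sum_congr rfl (fun i _ => by
        have : d i = f i - y i := rfl
        rw [this]; ring)
    rw [h1, Finset.sum_add_distrib, Finset.sum_add_distrib, ← Finset.mul_sum]
  have hcomb : ∑ i, (x i - y i) * d i + ∑ i, (y i - m i) * d i = ∑ i, (x i - m i) * d i := by
    rw [← Finset.sum_add_distrib]
    exact Finset.sum_congr rfl (fun i _ => by ring)
  have hd2 : 0 ≤ ∑ i, d i ^ 2 := Finset.sum_nonneg (fun i _ => sq_nonneg _)
  rw [hA] at hstep1
  linarith [hsuml1, hsumf, hquad, hcomb, hstep1, hd2]
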